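/- Fix n ≥ 1. Let F be a maximal intersecting subfamily of P([n]) and let A ∈ F be a minimal set of F (i.e., no proper subset of A belongs to F). Define G = ({B ⊆ [n+1] : B ∩ [n] ∈ F} \ {A}) ∪ {[n+1]\A} and G* = {[n+1]\B : B ∈ G}. Then {B ⊆ [n] : B ∈ G* and B ∪ {n+1} ∉ G*} = {A, [n]\A}. -/

import Mathlib

open Finset

variable {m : ℕ}

/-- A family of finsets is intersecting if any two members meet. -/
def IsIntersecting (F : Finset (Finset (Fin m))) : Prop :=
  ∀ A ∈ F, ∀ B ∈ F, (A ∩ B).Nonempty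

/-- A maximal intersecting subfamily of the power set of `Fin m`. -/
def IsMaxIntersecting (F : Finset (Finset (Fin m))) : Prop :=
  IsIntersecting F ∧ ∀ G : Finset (Finset (Fin m)), IsIntersecting G → F ⊆ G → G ⊆ F

/-- A family is subset-closed if it contains all subsets of its members. -/
def IsSubsetClosed (F : Finset (Finset (Fin m))) : Prop :=
  ∀ A ∈ F, ∀ B ⊆ A, B ∈ F

/-- The embedding of a family into `ℝ^{P([m])}`. -/
def famVec (F : Finset (Finset (Fin m))) : Finset (Fin m) → ℝ := fun A =>
  if A ∈ F ∧ Aᶜ ∉ F then 1 else if A ∉ F ∧ Aᶜ ∈ F then -1 else 0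

/-- The standard basis vector `e_A` of `ℝ^{P([m])}`. -/
def stdBasis (A : Finset (Fin m)) : Finset (Fin m) → ℝ := fun B => if B = A then 1 else 0

/-- The star of a family centered at `a`. -/
def starFam (a : Fin m) (F : Finset (Finset (Fin m))) : Finset (Finset (Fin m)) :=
  F.filter fun A => a ∈ A

/-- The setwise complement (dual) `F* = {Aᶜ : A ∈ F}`. -/
def dualFam (F : Finset (Finset (Fin m))) : Finset (Finset (Fin m)) :=
  F.image fun A => Aᶜ

/-- The copy of `[n]` inside `Fin (n+1)`. -/
def groundN (n : ℕ) : Finset (Fin (n + 1)) := Finset.univ.filter fun x => (x : ℕ) < n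

/-- The family `G = ({B ⊆ [n+1] : B ∩ [n] ∈ F} \ {A}) ∪ {[n+1] \ A}`. -/
def gFam (n : ℕ) (F : Finset (Finset (Fin (n + 1)))) (A : Finset (Fin (n + 1))) :
    Finset (Finset (Fin (n + 1))) :=
  ((Finset.univ.filter fun B : Finset (Fin (n + 1)) => B ∩ groundN n ∈ F).erase A) ∪ {Aᶜ}


lemma mem_dualFam {G : Finset (Finset (Fin m))} {X : Finset (Fin m)} :
    X ∈ dualFam G ↔ Xᶜ ∈ G := by
  simp only [dualFam, Finset.mem_image]
  constructor
  · rintro ⟨a, ha, rfl⟩; simpa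
  · intro h; exact ⟨Xᶜ, h, by simp⟩

lemma mem_gFam {n : ℕ} {F : Finset (Finset (Fin (n + 1)))} {A X : Finset (Fin (n + 1))} :
    X ∈ gFam n F A ↔ (X ≠ A ∧ X ∩ groundN n ∈ F) ∨ X = Aᶜ := by
  simp [gFam, mem_union, mem_erase, mem_filter, and_comm, or_comm]

lemma last_not_mem_groundN {n : ℕ} : Fin.last n ∉ groundN n := by
  simp [groundN]

lemma compl_insert_last {n : ℕ} (B : Finset (Fin (n + 1))) :
    (insert (Fin.last n) B)ᶜ = groundN n \ B := by
  ext x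
  have hx : (x : ℕ) ≤ n := Nat.lt_succ_iff.mp x.isLt
  simp only [Finset.mem_compl, mem_insert, mem_sdiff, groundN, mem_filter, mem_univ,
    true_and, not_or, Fin.ext_iff, Fin.val_last]
  constructor <;> rintro ⟨h1, h2⟩ <;> exact ⟨by omega, h2⟩

lemma compl_inter_ground {n : ℕ} (B : Finset (Fin (n + 1))) :
    Bᶜ ∩ groundN n = groundN n \ B := by
  ext x; simp [mem_sdiff, and_comm]

/-- For the construction `G` from a maximal intersecting `F ⊆ P([n])` and a minimal `A ∈ F`,
the fiber `{B ⊆ [n] : B ∈ G* ∧ B ∪ {n+1} ∉ G*}` is exactly `{A, [n] \ A}`. -/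
theorem gFam_fiber (n : ℕ) (hn : 1 ≤ n)
    (F : Finset (Finset (Fin (n + 1))))
    (hFsub : ∀ B ∈ F, B ⊆ groundN n)
    (hFi : IsIntersecting F)
    (hFmax : ∀ G : Finset (Finset (Fin (n + 1))),
      (∀ B ∈ G, B ⊆ groundN n) → IsIntersecting G → F ⊆ G → G ⊆ F)
    (A : Finset (Fin (n + 1))) (hA : A ∈ F) (hAmin : ∀ B ⊂ A, B ∉ F) :
    (groundN n).powerset.filter
        (fun B => B ∈ dualFam (gFam n F A) ∧ insert (Fin.last n) B ∉ dualFam (gFam n F A))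
      = {A, groundN n \ A} := by
  have hAsub : A ⊆ groundN n := hFsub A hA
  have hlastA : Fin.last n ∉ A := fun h => last_not_mem_groundN (hAsub h)
  have hlastA' : Fin.last n ∈ Aᶜ := Finset.mem_compl.mpr hlastA
  have hCnotF : groundN n \ A ∉ F := by
    intro h
    obtain ⟨x, hx⟩ := hFi A hA _ h
    simp only [mem_inter, mem_sdiff] at hx
    exact hx.2.2 hx.1
  have hsdA : groundN n \ (groundN n \ A) = A := Finset.sdiff_sdiff_eq_self hAsub
  have hsdAne : groundN n \ A ≠ Aᶜ := by
    intro h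
    exact last_not_mem_groundN (mem_sdiff.mp (h ▸ hlastA')).1
  have hAneC : A ≠ Aᶜ := fun h => hlastA (h ▸ hlastA')
  ext B
  simp only [mem_filter, mem_powerset, mem_insert, mem_singleton, mem_dualFam, mem_gFam,
    compl_insert_last, compl_inter_ground]
  constructor
  · rintro ⟨hB, h1, h2⟩
    push_neg at h2
    rcases h1 with ⟨hne, hmem⟩ | heq
    · by_cases hcase : groundN n \ B = A
      · right
        rw [← hcase, Finset.sdiff_sdiff_eq_self hB]
      · exact absurd hmem (by
          have h3 := h2.1 hcase
          rwa [Finset.inter_eq_left.mpr sdiff_subset] at h3)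
    · left
      have := congrArg compl heq
      simpa using this
  · rintro (rfl | rfl)
    · refine ⟨hAsub, Or.inr rfl, ?_⟩
      rintro (⟨-, hmem⟩ | heq)
      · rw [Finset.inter_eq_left.mpr sdiff_subset] at hmem
        exact hCnotF hmem
      · exact hsdAne heq
    · refine ⟨sdiff_subset, Or.inl ⟨?_, ?_⟩, ?_⟩
      · intro h
        apply hlastA
        rw [← h]
        simp [mem_sdiff, last_not_mem_groundN]
      · rw [hsdA]; exact hA
      · rw [hsdA]
        rintro (⟨hne, -⟩ | heq)
        · exact hne rfl
        · exact hAneC heq
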